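/- Fix λ > 0, z > 0, t > 0 and let f(x) = exp(−λ|x−z|). Then for x ≠ z, ∫_ℝ f(y)·exp(−λ(|z−y|−(z−y)))·p(t, y−x, λt) dy = exp((3/2)λ²t + λ(x−z))·[Φ((z−x)/√t − 2λ√t) + exp(−4λ(x−z))·Φ(−(z−x)/√t − 2λ√t)], where p(t, w, m) = (2πt)^{-1/2} exp(−(w−m)²/(2t)). -/

import Mathlib

open MeasureTheory Real

/-- Gaussian density with variance `t` and mean `m`, evaluated at `x`. -/
noncomputable def gaussDensity (t x m : ℝ) : ℝ :=
  Real.exp (-(x - m) ^ 2 / (2 * t)) / Real.sqrt (2 * Real.pi * t)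

/-- Standard normal cumulative distribution function. -/
noncomputable def Phi (x : ℝ) : ℝ :=
  ∫ u in Set.Iic x, Real.exp (-u ^ 2 / 2) / Real.sqrt (2 * Real.pi)

open Set in
lemma my_integral_comp_add_right_Iic (f : ℝ → ℝ) (c b : ℝ) :
    ∫ x in Iic c, f (x + b) = ∫ x in Iic (c + b), f x := by
  have A : MeasurableEmbedding fun x : ℝ => x + b :=
    (Homeomorph.addRight b).measurableEmbedding
  have h := A.setIntegral_map (μ := volume) f (Iic (c + b))
  rw [map_add_right_eq_self] at h
  have hpre : (fun x : ℝ => x + b) ⁻¹' Iic (c + b) = Iic c := by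
    ext y
    simp
  rw [hpre] at h
  exact h.symm

open Set in
lemma my_cdf_std (d : ℝ) :
    ∫ y in Ioi (-d), Real.exp (-y ^ 2 / 2) / Real.sqrt (2 * Real.pi) = Phi d := by
  have h := integral_comp_neg_Ioi (-d)
      (fun y : ℝ => Real.exp (-y ^ 2 / 2) / Real.sqrt (2 * Real.pi))
  simp only [neg_sq, neg_neg] at h
  rw [Phi, ← h]

open Set in
lemma my_cdf_Iic {t : ℝ} (ht : 0 < t) (b c : ℝ) :
    ∫ y in Iic c, Real.exp (-(y - b) ^ 2 / (2 * t)) / Real.sqrt (2 * Real.pi * t)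
      = Phi ((c - b) / Real.sqrt t) := by
  have hs : 0 < Real.sqrt t := Real.sqrt_pos.mpr ht
  have h1 : ∫ y in Iic c, Real.exp (-(y - b) ^ 2 / (2 * t)) / Real.sqrt (2 * Real.pi * t)
      = ∫ y in Iic (c + -b), Real.exp (-y ^ 2 / (2 * t)) / Real.sqrt (2 * Real.pi * t) := by
    rw [← my_integral_comp_add_right_Iic
      (fun y => Real.exp (-y ^ 2 / (2 * t)) / Real.sqrt (2 * Real.pi * t)) c (-b)]
    simp only [← sub_eq_add_neg]
  rw [h1, show c + -b = c - b by ring]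
  have h2 := integral_comp_neg_Iic (c - b)
      (fun y : ℝ => Real.exp (-y ^ 2 / (2 * t)) / Real.sqrt (2 * Real.pi * t))
  simp only [neg_sq] at h2
  rw [h2]
  set d := (c - b) / Real.sqrt t with hd
  have h3 := integral_comp_mul_left_Ioi
      (fun y => Real.exp (-y ^ 2 / (2 * t)) / Real.sqrt (2 * Real.pi * t)) (-d) hs
  have hsd : Real.sqrt t * -d = -(c - b) := by
    rw [hd, mul_neg, mul_div_cancel₀ _ hs.ne']
  rw [hsd] at h3
  have h4 : ∀ y : ℝ, Real.exp (-(Real.sqrt t * y) ^ 2 / (2 * t)) / Real.sqrt (2 * Real.pi * t)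
      = (Real.sqrt t)⁻¹ • (Real.exp (-y ^ 2 / 2) / Real.sqrt (2 * Real.pi)) := by
    intro y
    have hst : Real.sqrt (2 * Real.pi * t) = Real.sqrt (2 * Real.pi) * Real.sqrt t :=
      Real.sqrt_mul (by positivity) t
    have hexp : -(Real.sqrt t * y) ^ 2 / (2 * t) = -y ^ 2 / 2 := by
      rw [mul_pow, Real.sq_sqrt ht.le]
      field_simp
    rw [hst, hexp, smul_eq_mul]
    have h2pi : Real.sqrt (2 * Real.pi) ≠ 0 := by positivity
    field_simp
  have h5 : (∫ x in Ioi (-d),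
        Real.exp (-(Real.sqrt t * x) ^ 2 / (2 * t)) / Real.sqrt (2 * Real.pi * t))
      = (Real.sqrt t)⁻¹ • ∫ x in Ioi (-d), Real.exp (-x ^ 2 / 2) / Real.sqrt (2 * Real.pi) := by
    simp_rw [h4]
    rw [integral_smul]
  rw [h5] at h3
  replace h3 := congrArg (fun r : ℝ => Real.sqrt t • r) h3
  simp only [smul_smul, mul_inv_cancel₀ hs.ne', one_smul] at h3
  rw [← h3, my_cdf_std]

open Set in
lemma my_cdf_Ioi {t : ℝ} (ht : 0 < t) (b c : ℝ) :
    ∫ y in Ioi c, Real.exp (-(y - b) ^ 2 / (2 * t)) / Real.sqrt (2 * Real.pi * t)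
      = Phi ((b - c) / Real.sqrt t) := by
  have h := integral_comp_neg_Iic (-c)
      (fun y : ℝ => Real.exp (-(y - b) ^ 2 / (2 * t)) / Real.sqrt (2 * Real.pi * t))
  simp only [neg_neg] at h
  rw [← h]
  have heq : (fun y : ℝ => Real.exp (-(-y - b) ^ 2 / (2 * t)) / Real.sqrt (2 * Real.pi * t))
      = fun y : ℝ => Real.exp (-(y - -b) ^ 2 / (2 * t)) / Real.sqrt (2 * Real.pi * t) := by
    funext y
    congr 2
    ring
  calc ∫ y in Iic (-c), Real.exp (-(-y - b) ^ 2 / (2 * t)) / Real.sqrt (2 * Real.pi * t)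
      = ∫ y in Iic (-c), Real.exp (-(y - -b) ^ 2 / (2 * t)) / Real.sqrt (2 * Real.pi * t) := by
        rw [heq]
    _ = Phi ((-c - -b) / Real.sqrt t) := my_cdf_Iic ht (-b) (-c)
    _ = Phi ((b - c) / Real.sqrt t) := by rw [show -c - -b = b - c by ring]

lemma my_tilt {t : ℝ} (ht : 0 < t) (a b y : ℝ) :
    Real.exp (a * y) * (Real.exp (-(y - b) ^ 2 / (2 * t)) / Real.sqrt (2 * Real.pi * t))
      = Real.exp (a * b + a ^ 2 * t / 2) *
        (Real.exp (-(y - (b + a * t)) ^ 2 / (2 * t)) / Real.sqrt (2 * Real.pi * t)) := by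
  rw [mul_div_assoc', mul_div_assoc', ← Real.exp_add, ← Real.exp_add]
  congr 2
  field_simp
  ring

lemma my_integrable_tilt {t : ℝ} (ht : 0 < t) (a b : ℝ) :
    Integrable (fun y : ℝ =>
      Real.exp (a * y) * (Real.exp (-(y - b) ^ 2 / (2 * t)) / Real.sqrt (2 * Real.pi * t))) := by
  simp_rw [my_tilt ht a b]
  apply Integrable.const_mul
  apply Integrable.div_const
  have h0 : Integrable (fun y : ℝ => Real.exp (-(1 / (2 * t)) * y ^ 2)) :=
    integrable_exp_neg_mul_sq (by positivity)
  have h1 := h0.comp_sub_right (b + a * t)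
  have : (fun y : ℝ => Real.exp (-(1 / (2 * t)) * (y - (b + a * t)) ^ 2))
      = fun y : ℝ => Real.exp (-(y - (b + a * t)) ^ 2 / (2 * t)) := by
    funext y
    congr 1
    ring
  rwa [this] at h1

open Set in
lemma my_tilt_Iic {t : ℝ} (ht : 0 < t) (a b c : ℝ) :
    ∫ y in Iic c,
        Real.exp (a * y) * (Real.exp (-(y - b) ^ 2 / (2 * t)) / Real.sqrt (2 * Real.pi * t))
      = Real.exp (a * b + a ^ 2 * t / 2) * Phi ((c - (b + a * t)) / Real.sqrt t) := by
  simp_rw [my_tilt ht a b]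
  rw [integral_const_mul, my_cdf_Iic ht]

open Set in
lemma my_tilt_Ioi {t : ℝ} (ht : 0 < t) (a b c : ℝ) :
    ∫ y in Ioi c,
        Real.exp (a * y) * (Real.exp (-(y - b) ^ 2 / (2 * t)) / Real.sqrt (2 * Real.pi * t))
      = Real.exp (a * b + a ^ 2 * t / 2) * Phi (((b + a * t) - c) / Real.sqrt t) := by
  simp_rw [my_tilt ht a b]
  rw [integral_const_mul, my_cdf_Ioi ht]

open Set in
theorem stmt_14 (lam z t x : ℝ) (hlam : 0 < lam) (hz : 0 < z) (ht : 0 < t) (hx : x ≠ z) :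
    ∫ y : ℝ,
        Real.exp (-lam * |y - z|) * Real.exp (-lam * (|z - y| - (z - y))) *
          gaussDensity t (y - x) (lam * t) =
      Real.exp ((3 / 2) * lam ^ 2 * t + lam * (x - z)) *
        (Phi ((z - x) / Real.sqrt t - 2 * lam * Real.sqrt t)
          + Real.exp (-(4 * lam * (x - z))) *
            Phi (-((z - x) / Real.sqrt t) - 2 * lam * Real.sqrt t)) := by
  have hs : 0 < Real.sqrt t := Real.sqrt_pos.mpr ht
  have hss : Real.sqrt t * Real.sqrt t = t := Real.mul_self_sqrt ht.le
  set G : ℝ → ℝ := fun y =>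
    Real.exp (-(y - (x + lam * t)) ^ 2 / (2 * t)) / Real.sqrt (2 * Real.pi * t) with hGdef
  set F₁ : ℝ → ℝ := fun y => Real.exp (-(lam * z)) * (Real.exp (lam * y) * G y) with hF₁
  set F₂ : ℝ → ℝ := fun y => Real.exp (3 * lam * z) * (Real.exp (-(3 * lam) * y) * G y) with hF₂
  have hG : ∀ y : ℝ, gaussDensity t (y - x) (lam * t) = G y := by
    intro y
    rw [hGdef, gaussDensity]
    congr 3
    ring
  have hF : (fun y : ℝ =>
      Real.exp (-lam * |y - z|) * Real.exp (-lam * (|z - y| - (z - y))) *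
        gaussDensity t (y - x) (lam * t)) = (Iic z).piecewise F₁ F₂ := by
    funext y
    rw [hG y]
    by_cases h : y ≤ z
    · rw [Set.piecewise_eq_of_mem (Iic z) F₁ F₂ (h : y ∈ Iic z)]
      simp only [hF₁]
      rw [abs_of_nonpos (by linarith : y - z ≤ 0), abs_of_nonneg (by linarith : (0:ℝ) ≤ z - y)]
      rw [sub_self, mul_zero, Real.exp_zero, mul_one, ← mul_assoc, ← Real.exp_add]
      congr 2
      ring
    · push_neg at h
      rw [Set.piecewise_eq_of_notMem (Iic z) F₁ F₂
        (by simpa using not_le.mpr h : y ∉ Iic z)]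
      simp only [hF₂]
      rw [abs_of_nonneg (by linarith : (0:ℝ) ≤ y - z), abs_of_nonpos (by linarith : z - y ≤ 0)]
      rw [← Real.exp_add, ← mul_assoc, ← Real.exp_add]
      congr 2
      ring
  rw [hF]
  have hi1 : IntegrableOn F₁ (Iic z) := ((my_integrable_tilt ht lam (x + lam * t)).const_mul _).integrableOn
  have hi2 : IntegrableOn F₂ (Ioi z) :=
    ((my_integrable_tilt ht (-(3 * lam)) (x + lam * t)).const_mul _).integrableOn
  have hp1 : IntegrableOn ((Iic z).piecewise F₁ F₂) (Iic z) :=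
    hi1.congr_fun (fun y hy => (Set.piecewise_eq_of_mem _ _ _ hy).symm) measurableSet_Iic
  have hp2 : IntegrableOn ((Iic z).piecewise F₁ F₂) (Ioi z) :=
    hi2.congr_fun (fun y hy =>
      (Set.piecewise_eq_of_notMem _ _ _ (by simpa using not_le.mpr hy)).symm) measurableSet_Ioi
  rw [← intervalIntegral.integral_Iic_add_Ioi hp1 hp2]
  have hs1 : ∫ x in Iic z, (Iic z).piecewise F₁ F₂ x = ∫ x in Iic z, F₁ x :=
    setIntegral_congr_fun measurableSet_Iic
      (fun y hy => Set.piecewise_eq_of_mem (Iic z) F₁ F₂ hy)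
  have hs2 : ∫ x in Ioi z, (Iic z).piecewise F₁ F₂ x = ∫ x in Ioi z, F₂ x :=
    setIntegral_congr_fun measurableSet_Ioi
      (fun y (hy : z < y) =>
        Set.piecewise_eq_of_notMem (Iic z) F₁ F₂ (by simpa using not_le.mpr hy))
  rw [hs1, hs2]
  simp only [hF₁, hF₂]
  rw [integral_const_mul, integral_const_mul, my_tilt_Iic ht lam (x + lam * t) z, my_tilt_Ioi ht (-(3 * lam)) (x + lam * t) z]
  have hu1 : (z - ((x + lam * t) + lam * t)) / Real.sqrt t
      = (z - x) / Real.sqrt t - 2 * lam * Real.sqrt t := by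
    rw [show z - (x + lam * t + lam * t) = (z - x) - 2 * lam * t by ring, ← hss]
    field_simp
    ring_nf
    rw [Real.sq_sqrt ht.le]
    linear_combination 2 * lam * Real.sq_sqrt ht.le
  have hu2 : (((x + lam * t) + -(3 * lam) * t) - z) / Real.sqrt t
      = -((z - x) / Real.sqrt t) - 2 * lam * Real.sqrt t := by
    rw [show (x + lam * t + -(3 * lam) * t) - z = -((z - x) + 2 * lam * t) by ring, ← hss]
    field_simp
    ring_nf
    rw [Real.sq_sqrt ht.le]
    linear_combination 2 * lam * Real.sq_sqrt ht.le
  rw [hu1, hu2]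
  have e1 : Real.exp (-(lam * z)) * Real.exp (lam * (x + lam * t) + lam ^ 2 * t / 2)
      = Real.exp ((3 / 2) * lam ^ 2 * t + lam * (x - z)) := by
    rw [← Real.exp_add]
    congr 1
    ring
  have e2 : Real.exp (3 * lam * z) *
        Real.exp (-(3 * lam) * (x + lam * t) + (-(3 * lam)) ^ 2 * t / 2)
      = Real.exp ((3 / 2) * lam ^ 2 * t + lam * (x - z)) * Real.exp (-(4 * lam * (x - z))) := by
    rw [← Real.exp_add, ← Real.exp_add]
    congr 1
    ring
  linear_combination Phi ((z - x) / Real.sqrt t - 2 * lam * Real.sqrt t) * e1 +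
    Phi (-((z - x) / Real.sqrt t) - 2 * lam * Real.sqrt t) * e2
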